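/- Let 0 < γ ≤ 1 ≤ Γ and let X be a selfadjoint operator on a complex Hilbert space with γ·I ≤ X ≤ Γ·I, and ν ∈ [0,1]. Then (1/(2Γ²))·ν·(1−ν)·(X−I)² ≤ ln((1−ν)·I + ν·X) − ν·ln X ≤ (1/(2γ²))·ν·(1−ν)·(X−I)² in the operator order. -/

import Mathlib

open Real Set

section scalarAux

lemma hasDerivAt_F {ν c x : ℝ} (hx : 0 < x) (hp : 0 < 1 - ν + ν * x) :
    HasDerivAt (fun y => Real.log (1 - ν + ν * y) - ν * Real.log y - c * (y - 1)^2)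
      (ν / (1 - ν + ν * x) - ν * x⁻¹ - c * (2 * (x - 1))) x := by
  have h1 : HasDerivAt (fun y : ℝ => 1 - ν + ν * y) ν x := by
    simpa using ((hasDerivAt_id x).const_mul ν).const_add (1 - ν)
  have h2 := h1.log hp.ne'
  have h4 := (Real.hasDerivAt_log hx.ne').const_mul ν
  have h5 : HasDerivAt (fun y : ℝ => (y - 1)^2) (2 * (x - 1)) x := by
    simpa [mul_comm] using ((hasDerivAt_id x).sub_const 1).fun_pow 2
  exact (h2.sub h4).sub (h5.const_mul c)

variable {γ Γ ν c : ℝ}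

lemma p_pos (hγ : 0 < γ) (hγ1 : γ ≤ 1) (hν0 : 0 ≤ ν) (hν1 : ν ≤ 1)
    {x : ℝ} (hx1 : γ ≤ x) : 0 < 1 - ν + ν * x := by
  nlinarith

lemma F_nonneg (hγ : 0 < γ) (hγ1 : γ ≤ 1) (h1Γ : 1 ≤ Γ) (hν0 : 0 ≤ ν) (hν1 : ν ≤ 1)
    (hc : ∀ y ∈ Icc γ Γ, 2 * c * ((1 - ν + ν * y) * y) ≤ ν * (1 - ν))
    {x : ℝ} (hx1 : γ ≤ x) (hx2 : x ≤ Γ) :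
    c * (x - 1)^2 ≤ Real.log (1 - ν + ν * x) - ν * Real.log x := by
  set f : ℝ → ℝ := fun y => Real.log (1 - ν + ν * y) - ν * Real.log y - c * (y - 1)^2 with hf
  have hx0 : 0 < x := hγ.trans_le hx1
  have hdiff : ∀ y ∈ Icc γ Γ, HasDerivAt f
      (ν / (1 - ν + ν * y) - ν * y⁻¹ - c * (2 * (y - 1))) y := fun y hy =>
    hasDerivAt_F (hγ.trans_le hy.1) (p_pos hγ hγ1 hν0 hν1 hy.1)
  have hcont : ContinuousOn f (Icc γ Γ) := fun y hy =>
    ((hdiff y hy).differentiableAt.continuousAt).continuousWithinAt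
  have hsign : ∀ y ∈ Icc γ Γ, (0 ≤ y - 1 → 0 ≤ deriv f y) ∧ (y - 1 ≤ 0 → deriv f y ≤ 0) := by
    intro y hy
    have hy0 : 0 < y := hγ.trans_le hy.1
    have hp : 0 < 1 - ν + ν * y := p_pos hγ hγ1 hν0 hν1 hy.1
    have hd := (hdiff y hy).deriv
    rw [hd]
    have hpy : 0 < (1 - ν + ν * y) * y := mul_pos hp hy0
    have e : ν / (1 - ν + ν * y) - ν * y⁻¹ = ν * (1 - ν) * (y - 1) / ((1 - ν + ν * y) * y) := by
      field_simp
      ring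
    have hcy := hc y hy
    have h2c : 2 * c ≤ ν * (1 - ν) / ((1 - ν + ν * y) * y) :=
      (le_div_iff₀ hpy).mpr hcy
    have e2 : ν * (1 - ν) / ((1 - ν + ν * y) * y) * (y - 1)
        = ν * (1 - ν) * (y - 1) / ((1 - ν + ν * y) * y) := by ring
    constructor
    · intro hy1
      have h := mul_le_mul_of_nonneg_right h2c hy1
      rw [e]
      linarith [e2 ▸ h]
    · intro hy1
      have h := mul_le_mul_of_nonpos_right h2c hy1
      rw [e]
      linarith [e2 ▸ h]
  have hF1 : f 1 = 0 := by simp [hf]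
  rcases le_total x 1 with hx1' | hx1'
  · have hanti : AntitoneOn f (Icc γ 1) := by
      apply antitoneOn_of_deriv_nonpos (convex_Icc γ 1)
      · exact hcont.mono (Icc_subset_Icc le_rfl h1Γ)
      · intro y hy
        rw [interior_Icc] at hy
        exact (hdiff y ⟨hy.1.le, hy.2.le.trans h1Γ⟩).differentiableAt.differentiableWithinAt
      · intro y hy
        rw [interior_Icc] at hy
        exact (hsign y ⟨hy.1.le, hy.2.le.trans h1Γ⟩).2 (by linarith [hy.2])
    have := hanti ⟨hx1, hx1'⟩ ⟨hγ1, le_rfl⟩ hx1'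
    rw [hF1] at this
    simpa [hf, sub_nonneg] using this
  · have hmono : MonotoneOn f (Icc 1 Γ) := by
      apply monotoneOn_of_deriv_nonneg (convex_Icc 1 Γ)
      · exact hcont.mono (Icc_subset_Icc hγ1 le_rfl)
      · intro y hy
        rw [interior_Icc] at hy
        exact (hdiff y ⟨hγ1.trans hy.1.le, hy.2.le⟩).differentiableAt.differentiableWithinAt
      · intro y hy
        rw [interior_Icc] at hy
        exact (hsign y ⟨hγ1.trans hy.1.le, hy.2.le⟩).1 (by linarith [hy.1])
    have := hmono ⟨le_rfl, h1Γ⟩ ⟨hx1', hx2⟩ hx1'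
    rw [hF1] at this
    simpa [hf, sub_nonneg] using this

lemma F_nonpos (hγ : 0 < γ) (hγ1 : γ ≤ 1) (h1Γ : 1 ≤ Γ) (hν0 : 0 ≤ ν) (hν1 : ν ≤ 1)
    (hc : ∀ y ∈ Icc γ Γ, ν * (1 - ν) ≤ 2 * c * ((1 - ν + ν * y) * y))
    {x : ℝ} (hx1 : γ ≤ x) (hx2 : x ≤ Γ) :
    Real.log (1 - ν + ν * x) - ν * Real.log x ≤ c * (x - 1)^2 := by
  set f : ℝ → ℝ := fun y => Real.log (1 - ν + ν * y) - ν * Real.log y - c * (y - 1)^2 with hf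
  have hx0 : 0 < x := hγ.trans_le hx1
  have hdiff : ∀ y ∈ Icc γ Γ, HasDerivAt f
      (ν / (1 - ν + ν * y) - ν * y⁻¹ - c * (2 * (y - 1))) y := fun y hy =>
    hasDerivAt_F (hγ.trans_le hy.1) (p_pos hγ hγ1 hν0 hν1 hy.1)
  have hcont : ContinuousOn f (Icc γ Γ) := fun y hy =>
    ((hdiff y hy).differentiableAt.continuousAt).continuousWithinAt
  have hsign : ∀ y ∈ Icc γ Γ, (0 ≤ y - 1 → deriv f y ≤ 0) ∧ (y - 1 ≤ 0 → 0 ≤ deriv f y) := by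
    intro y hy
    have hy0 : 0 < y := hγ.trans_le hy.1
    have hp : 0 < 1 - ν + ν * y := p_pos hγ hγ1 hν0 hν1 hy.1
    have hd := (hdiff y hy).deriv
    rw [hd]
    have hpy : 0 < (1 - ν + ν * y) * y := mul_pos hp hy0
    have e : ν / (1 - ν + ν * y) - ν * y⁻¹ = ν * (1 - ν) * (y - 1) / ((1 - ν + ν * y) * y) := by
      field_simp
      ring
    have hcy := hc y hy
    have h2c : ν * (1 - ν) / ((1 - ν + ν * y) * y) ≤ 2 * c :=
      (div_le_iff₀ hpy).mpr hcy
    have e2 : ν * (1 - ν) / ((1 - ν + ν * y) * y) * (y - 1)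
        = ν * (1 - ν) * (y - 1) / ((1 - ν + ν * y) * y) := by ring
    constructor
    · intro hy1
      have h := mul_le_mul_of_nonneg_right h2c hy1
      rw [e]
      linarith [e2 ▸ h]
    · intro hy1
      have h := mul_le_mul_of_nonpos_right h2c hy1
      rw [e]
      linarith [e2 ▸ h]
  have hF1 : f 1 = 0 := by simp [hf]
  rcases le_total x 1 with hx1' | hx1'
  · have hmono : MonotoneOn f (Icc γ 1) := by
      apply monotoneOn_of_deriv_nonneg (convex_Icc γ 1)
      · exact hcont.mono (Icc_subset_Icc le_rfl h1Γ)
      · intro y hy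
        rw [interior_Icc] at hy
        exact (hdiff y ⟨hy.1.le, hy.2.le.trans h1Γ⟩).differentiableAt.differentiableWithinAt
      · intro y hy
        rw [interior_Icc] at hy
        exact (hsign y ⟨hy.1.le, hy.2.le.trans h1Γ⟩).2 (by linarith [hy.2])
    have := hmono ⟨hx1, hx1'⟩ ⟨hγ1, le_rfl⟩ hx1'
    rw [hF1] at this
    simpa [hf, sub_nonpos] using this
  · have hanti : AntitoneOn f (Icc 1 Γ) := by
      apply antitoneOn_of_deriv_nonpos (convex_Icc 1 Γ)
      · exact hcont.mono (Icc_subset_Icc hγ1 le_rfl)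
      · intro y hy
        rw [interior_Icc] at hy
        exact (hdiff y ⟨hγ1.trans hy.1.le, hy.2.le⟩).differentiableAt.differentiableWithinAt
      · intro y hy
        rw [interior_Icc] at hy
        exact (hsign y ⟨hγ1.trans hy.1.le, hy.2.le⟩).1 (by linarith [hy.1])
    have := hanti ⟨le_rfl, h1Γ⟩ ⟨hx1', hx2⟩ hx1'
    rw [hF1] at this
    simpa [hf, sub_nonpos] using this

lemma scalar_key (hγ : 0 < γ) (hγ1 : γ ≤ 1) (h1Γ : 1 ≤ Γ) (hν0 : 0 ≤ ν) (hν1 : ν ≤ 1)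
    {x : ℝ} (hx1 : γ ≤ x) (hx2 : x ≤ Γ) :
    1/(2 * Γ^2) * ν * (1 - ν) * (x - 1)^2 ≤ Real.log (1 - ν + ν * x) - ν * Real.log x ∧
    Real.log (1 - ν + ν * x) - ν * Real.log x ≤ 1/(2 * γ^2) * ν * (1 - ν) * (x - 1)^2 := by
  have hΓ0 : 0 < Γ := lt_of_lt_of_le one_pos h1Γ
  constructor
  · have := F_nonneg (c := 1/(2 * Γ^2) * ν * (1 - ν)) hγ hγ1 h1Γ hν0 hν1 ?_ hx1 hx2
    · linarith [this]
    · intro y hy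
      have hp : 0 < 1 - ν + ν * y := p_pos hγ hγ1 hν0 hν1 hy.1
      have hy0 : 0 < y := hγ.trans_le hy.1
      have hpΓ : 1 - ν + ν * y ≤ Γ := by nlinarith [hy.2]
      have hyΓ : y ≤ Γ := hy.2
      have hΓ2 : (1 - ν + ν * y) * y ≤ Γ^2 := by nlinarith
      have hνν : 0 ≤ ν * (1 - ν) := mul_nonneg hν0 (by linarith)
      have he : 2 * (1/(2 * Γ^2) * ν * (1 - ν)) * ((1 - ν + ν * y) * y)
          = ν * (1 - ν) * (((1 - ν + ν * y) * y) / Γ^2) := by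
        field_simp
      rw [he]
      calc ν * (1 - ν) * (((1 - ν + ν * y) * y) / Γ^2)
          ≤ ν * (1 - ν) * 1 := by
            apply mul_le_mul_of_nonneg_left _ hνν
            rw [div_le_one (by positivity)]
            exact hΓ2
        _ = ν * (1 - ν) := mul_one _
  · have := F_nonpos (c := 1/(2 * γ^2) * ν * (1 - ν)) hγ hγ1 h1Γ hν0 hν1 ?_ hx1 hx2
    · linarith [this]
    · intro y hy
      have hp : 0 < 1 - ν + ν * y := p_pos hγ hγ1 hν0 hν1 hy.1
      have hy0 : 0 < y := hγ.trans_le hy.1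
      have hpγ : γ ≤ 1 - ν + ν * y := by nlinarith [hy.1]
      have hγ2 : γ^2 ≤ (1 - ν + ν * y) * y := by nlinarith [hy.1]
      have hνν : 0 ≤ ν * (1 - ν) := mul_nonneg hν0 (by linarith)
      have he : 2 * (1/(2 * γ^2) * ν * (1 - ν)) * ((1 - ν + ν * y) * y)
          = ν * (1 - ν) * (((1 - ν + ν * y) * y) / γ^2) := by
        field_simp
      rw [he]
      calc ν * (1 - ν) = ν * (1 - ν) * 1 := (mul_one _).symm
        _ ≤ ν * (1 - ν) * (((1 - ν + ν * y) * y) / γ^2) := by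
            apply mul_le_mul_of_nonneg_left _ hνν
            rw [le_div_iff₀ (by positivity)]
            linarith [hγ2]

end scalarAux

theorem stmt_19 {H : Type*} [NormedAddCommGroup H] [InnerProductSpace ℂ H] [CompleteSpace H]
    (γ Γ : ℝ) (hγ : 0 < γ) (hγ1 : γ ≤ 1) (h1Γ : 1 ≤ Γ)
    (X : H →L[ℂ] H) (hX : IsSelfAdjoint X)
    (hγX : γ • (1 : H →L[ℂ] H) ≤ X) (hXΓ : X ≤ Γ • (1 : H →L[ℂ] H))
    (ν : ℝ) (hν : ν ∈ Set.Icc (0:ℝ) 1) :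
    (1/(2 * Γ^2) * ν * (1 - ν)) • (X - 1)^2
      ≤ cfc Real.log ((1 - ν) • (1 : H →L[ℂ] H) + ν • X) - ν • cfc Real.log X ∧
    cfc Real.log ((1 - ν) • (1 : H →L[ℂ] H) + ν • X) - ν • cfc Real.log X
      ≤ (1/(2 * γ^2) * ν * (1 - ν)) • (X - 1)^2 := by
  obtain ⟨hν0, hν1⟩ := hν
  have hspec : spectrum ℝ X ⊆ Set.Icc γ Γ := by
    intro t ht
    constructor
    · exact (algebraMap_le_iff_le_spectrum (r := γ) (a := X) hX).mp
        (by rwa [Algebra.algebraMap_eq_smul_one]) t ht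
    · exact (le_algebraMap_iff_spectrum_le (r := Γ) (a := X) hX).mp
        (by rwa [Algebra.algebraMap_eq_smul_one]) t ht
  have hp_pos : ∀ x ∈ Set.Icc γ Γ, 0 < 1 - ν + ν * x := fun x hx => by nlinarith [hx.1]
  have hlog : ContinuousOn Real.log (spectrum ℝ X) :=
    Real.continuousOn_log.mono fun x hx => by
      simpa using ((hγ.trans_le (hspec hx).1).ne')
  have haff : ContinuousOn (fun x : ℝ => 1 - ν + ν * x) (spectrum ℝ X) := by fun_prop
  have hlogaff : ContinuousOn (fun x : ℝ => Real.log (1 - ν + ν * x)) (spectrum ℝ X) := by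
    apply Real.continuousOn_log.comp haff
    intro x hx
    simpa using (hp_pos x (hspec hx)).ne'
  have hνlog : ContinuousOn (fun x : ℝ => ν * Real.log x) (spectrum ℝ X) :=
    continuousOn_const.mul hlog
  have hA : (1 - ν) • (1 : H →L[ℂ] H) + ν • X = cfc (fun x : ℝ => 1 - ν + ν * x) X := by
    rw [cfc_const_add (1 - ν) (fun x => ν * x) X (by fun_prop) hX,
      cfc_const_mul ν (fun x : ℝ => x) X (by fun_prop), cfc_id' ℝ X hX,
      Algebra.algebraMap_eq_smul_one]
  have hlogA : cfc Real.log ((1 - ν) • (1 : H →L[ℂ] H) + ν • X)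
      = cfc (fun x : ℝ => Real.log (1 - ν + ν * x)) X := by
    have hg : ContinuousOn Real.log ((fun x : ℝ => 1 - ν + ν * x) '' spectrum ℝ X) := by
      apply Real.continuousOn_log.mono
      rintro - ⟨x, hx, rfl⟩
      simpa using (hp_pos x (hspec hx)).ne'
    rw [hA, ← cfc_comp' Real.log (fun x : ℝ => 1 - ν + ν * x) X hg haff hX]
  have hsmul : ν • cfc Real.log X = cfc (fun x : ℝ => ν * Real.log x) X :=
    (cfc_const_mul ν Real.log X hlog).symm
  have hXm1 : X - 1 = cfc (fun x : ℝ => x - 1) X := by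
    rw [cfc_sub (fun x : ℝ => x) (fun _ => 1) X (by fun_prop) (by fun_prop),
      cfc_id' ℝ X hX, cfc_const 1 X hX, map_one]
  have hsq : ∀ c : ℝ, c • (X - 1)^2 = cfc (fun x : ℝ => c * (x - 1)^2) X := by
    intro c
    rw [cfc_const_mul c (fun x : ℝ => (x - 1)^2) X (by fun_prop),
      cfc_pow (fun x : ℝ => x - 1) 2 X (by fun_prop) hX, ← hXm1]
  have hdiff : cfc Real.log ((1 - ν) • (1 : H →L[ℂ] H) + ν • X) - ν • cfc Real.log X
      = cfc (fun x : ℝ => Real.log (1 - ν + ν * x) - ν * Real.log x) X := by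
    rw [hlogA, hsmul, ← cfc_sub _ _ X hlogaff hνlog]
  constructor
  · rw [hsq, hdiff]
    exact cfc_mono (fun x hx =>
      (scalar_key hγ hγ1 h1Γ hν0 hν1 (hspec hx).1 (hspec hx).2).1)
      (by fun_prop) (hlogaff.sub hνlog)
  · rw [hsq, hdiff]
    exact cfc_mono (fun x hx =>
      (scalar_key hγ hγ1 h1Γ hν0 hν1 (hspec hx).1 (hspec hx).2).2)
      (hlogaff.sub hνlog) (by fun_prop)
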